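/- Let h: ℝ^d → ℝ be of the form h(x) = Σᵢ f((Ax − b)ᵢ) with f C-quasi-self-concordant. Fix x and let res_x(Δ) = ∇f(x)ᵀ(AΔ) − (1/e)·(AΔ)ᵀ∇²f(x)(AΔ). If ‖AΔ‖_∞ ≤ 1/C, then h(x − Δ) − h(x) ≥ −res_x(Δ). -/

import Mathlib

lemma g_hasDeriv (r : ℝ) :
    HasDerivAt (fun r : ℝ => 1 + (r-1)*Real.exp r - r^2*Real.exp (r-1))
      (r * Real.exp (r-1) * (Real.exp 1 - 2 - r)) r := by
  have h1 : HasDerivAt (fun r : ℝ => Real.exp r) (Real.exp r) r := Real.hasDerivAt_exp r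
  have h2 : HasDerivAt (fun r : ℝ => Real.exp (r-1)) (Real.exp (r-1)) r := by
    simpa [Function.comp_def] using (Real.hasDerivAt_exp (r-1)).comp r ((hasDerivAt_id r).sub_const 1)
  have h3 : HasDerivAt (fun r : ℝ => 1 + (r-1)*Real.exp r - r^2*Real.exp (r-1))
      (0 + ((1 * Real.exp r + (r-1)*Real.exp r) - (2*r^1*Real.exp (r-1) + r^2*Real.exp (r-1)))) r := by
    exact ((hasDerivAt_const r (1:ℝ)).add (((hasDerivAt_id r).sub_const 1).mul h1)).sub
      ((hasDerivAt_pow 2 r).mul h2) |>.congr_deriv (by simp only [id_eq]; ring)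
  convert h3 using 1
  have : Real.exp r = Real.exp (r-1) * Real.exp 1 := by
    rw [← Real.exp_add]; ring_nf
  rw [this]; ring

lemma g_nonneg {r : ℝ} (h0 : 0 ≤ r) (h1 : r ≤ 1) :
    0 ≤ 1 + (r-1)*Real.exp r - r^2*Real.exp (r-1) := by
  set g : ℝ → ℝ := fun r => 1 + (r-1)*Real.exp r - r^2*Real.exp (r-1) with hg
  have hdiff : Differentiable ℝ g := fun r => (g_hasDeriv r).differentiableAt
  have hd : ∀ r, deriv g r = r * Real.exp (r-1) * (Real.exp 1 - 2 - r) :=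
    fun r => (g_hasDeriv r).deriv
  have he2 : (2:ℝ) ≤ Real.exp 1 - 0 := by
    have := Real.exp_one_gt_d9; norm_num at this ⊢; linarith
  have he3 : Real.exp 1 ≤ 3 := by
    have := Real.exp_one_lt_d9; linarith
  have hg0 : g 0 = 0 := by simp [hg]
  have hg1 : g 1 = 0 := by simp [hg]
  rcases le_or_gt r (Real.exp 1 - 2) with hcase | hcase
  · -- monotone on [0, e-2]
    have hmono : MonotoneOn g (Set.Icc 0 (Real.exp 1 - 2)) := by
      apply monotoneOn_of_deriv_nonneg (convex_Icc _ _) hdiff.continuous.continuousOn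
        (hdiff.differentiableOn)
      intro t ht
      rw [interior_Icc] at ht
      rw [hd]
      have ha : 0 ≤ Real.exp 1 - 2 - t := by linarith [ht.2]
      have hb : (0:ℝ) ≤ t := le_of_lt ht.1
      have := Real.exp_nonneg (t-1)
      positivity
    have := hmono ⟨le_refl 0, by linarith⟩ ⟨h0, hcase⟩ h0
    rwa [hg0] at this
  · -- antitone on [e-2, 1]
    have hanti : AntitoneOn g (Set.Icc (Real.exp 1 - 2) 1) := by
      apply antitoneOn_of_deriv_nonpos (convex_Icc _ _) hdiff.continuous.continuousOn
        (hdiff.differentiableOn)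
      intro t ht
      rw [interior_Icc] at ht
      rw [hd]
      have h1 : Real.exp 1 - 2 - t ≤ 0 := by linarith [ht.1]
      have h2 : 0 ≤ t := by linarith [ht.1]
      have := mul_nonneg h2 (Real.exp_nonneg (t-1))
      nlinarith [Real.exp_nonneg (t-1)]
    have := hanti ⟨hcase.le, h1⟩ ⟨by linarith, le_refl 1⟩ h1
    rwa [hg1] at this

lemma scalar_ineq {r : ℝ} (h0 : 0 ≤ r) (h1 : r ≤ 1) :
    r ^ 2 * (Real.exp 1)⁻¹ ≤ Real.exp (-r) + r - 1 := by
  have hg := g_nonneg h0 h1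
  have key : r^2 * Real.exp (r-1) ≤ 1 + (r-1)*Real.exp r := by linarith
  have hexp : Real.exp (-r) > 0 := Real.exp_pos _
  have h2 := mul_le_mul_of_nonneg_right key (le_of_lt hexp)
  have e1 : Real.exp (r-1) * Real.exp (-r) = (Real.exp 1)⁻¹ := by
    rw [← Real.exp_add, ← Real.exp_neg]; ring_nf
  have e2 : Real.exp r * Real.exp (-r) = 1 := by rw [← Real.exp_add]; simp
  nlinarith [h2, Real.exp_pos r]


section
variable (C : ℝ) (f : ℝ → ℝ)

lemma derivs (hf : ContDiff ℝ 3 f) :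
    Differentiable ℝ f ∧ Differentiable ℝ (deriv f) ∧
      Differentiable ℝ (iteratedDeriv 2 f) ∧
      deriv (deriv f) = iteratedDeriv 2 f ∧
      deriv (iteratedDeriv 2 f) = iteratedDeriv 3 f := by
  have h3 : ContDiff ℝ ((2:ℕ) + 1) f := by exact_mod_cast hf
  obtain ⟨hd0, -, h2⟩ := contDiff_succ_iff_deriv.mp h3
  have h2' : ContDiff ℝ ((1:ℕ) + 1) (deriv f) := by exact_mod_cast h2
  obtain ⟨hd1, -, h1⟩ := contDiff_succ_iff_deriv.mp h2'
  have h1' : ContDiff ℝ ((0:ℕ) + 1) (deriv (deriv f)) := by exact_mod_cast h1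
  obtain ⟨hd2, -, -⟩ := contDiff_succ_iff_deriv.mp h1'
  have e2 : iteratedDeriv 2 f = deriv (deriv f) := by
    rw [show (2:ℕ) = 1 + 1 from rfl, iteratedDeriv_succ, iteratedDeriv_one]
  have e3 : iteratedDeriv 3 f = deriv (iteratedDeriv 2 f) := by
    rw [show (3:ℕ) = 2 + 1 from rfl, iteratedDeriv_succ]
  exact ⟨hd0, hd1, by rwa [e2], e2.symm, e3.symm⟩

lemma stab (hC : 0 < C) (hf : ContDiff ℝ 3 f)
    (hqsc : ∀ t : ℝ, |iteratedDeriv 3 f t| ≤ C * iteratedDeriv 2 f t)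
    (u t : ℝ) :
    iteratedDeriv 2 f u * Real.exp (-(C * |t|)) ≤ iteratedDeriv 2 f (u - t) := by
  obtain ⟨hd0, hd1, hd2, e2, e3⟩ := derivs f hf
  set f2 := iteratedDeriv 2 f
  set f3 := iteratedDeriv 3 f
  have hder2 : ∀ y, HasDerivAt f2 (f3 y) y := by
    intro y; rw [← e3]; exact (hd2 y).hasDerivAt
  have hcomp : ∀ s : ℝ, HasDerivAt (fun s => f2 (u - s)) (-f3 (u - s)) s := by
    intro s
    simpa [Function.comp_def] using (hder2 (u - s)).comp s ((hasDerivAt_const s u).sub (hasDerivAt_id s))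
  have hf2nn : ∀ y, 0 ≤ f2 y := fun y => nonneg_of_mul_nonneg_right
    (le_trans (abs_nonneg _) (hqsc y)) hC
  have hexp : ∀ a s : ℝ, HasDerivAt (fun s : ℝ => Real.exp (a * s)) (a * Real.exp (a * s)) s := by
    intro a s
    simpa [mul_comm, Function.comp_def] using (Real.hasDerivAt_exp (a * s)).comp s ((hasDerivAt_id s).const_mul a)
  rcases le_or_gt 0 t with ht | ht
  · -- p s = f2 (u - s) * exp (C * s), monotone on [0, t]
    set p : ℝ → ℝ := fun s => f2 (u - s) * Real.exp (C * s) with hp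
    have hpd : ∀ s, HasDerivAt p ((-f3 (u - s)) * Real.exp (C * s)
        + f2 (u - s) * (C * Real.exp (C * s))) s := fun s => (hcomp s).mul (hexp C s)
    have hpdiff : Differentiable ℝ p := fun s => (hpd s).differentiableAt
    have hmono : MonotoneOn p (Set.Icc 0 t) := by
      apply monotoneOn_of_deriv_nonneg (convex_Icc _ _) hpdiff.continuous.continuousOn
        hpdiff.differentiableOn
      intro s _
      rw [(hpd s).deriv]
      have h2 : f3 (u - s) ≤ C * f2 (u - s) := le_trans (le_abs_self _) (hqsc (u - s))
      have h3 := Real.exp_pos (C * s)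
      nlinarith
    have := hmono (Set.left_mem_Icc.mpr ht) (Set.right_mem_Icc.mpr ht) ht
    simp only [hp, mul_zero, Real.exp_zero, mul_one, sub_zero] at this
    rw [abs_of_nonneg ht]
    calc f2 u * Real.exp (-(C * t)) ≤ (f2 (u - t) * Real.exp (C * t)) * Real.exp (-(C * t)) := by
          apply mul_le_mul_of_nonneg_right this (Real.exp_nonneg _)
      _ = f2 (u - t) := by rw [mul_assoc, ← Real.exp_add]; simp
  · -- q s = f2 (u - s) * exp (-C * s), antitone on [t, 0]
    set q : ℝ → ℝ := fun s => f2 (u - s) * Real.exp (-C * s) with hq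
    have hqd : ∀ s, HasDerivAt q ((-f3 (u - s)) * Real.exp (-C * s)
        + f2 (u - s) * (-C * Real.exp (-C * s))) s := fun s => (hcomp s).mul (hexp (-C) s)
    have hqdiff : Differentiable ℝ q := fun s => (hqd s).differentiableAt
    have hanti : AntitoneOn q (Set.Icc t 0) := by
      apply antitoneOn_of_deriv_nonpos (convex_Icc _ _) hqdiff.continuous.continuousOn
        hqdiff.differentiableOn
      intro s _
      rw [(hqd s).deriv]
      have h2 : -f3 (u - s) ≤ C * f2 (u - s) := le_trans (neg_le_abs _) (hqsc (u - s))
      have h3 := Real.exp_pos (-C * s)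
      nlinarith
    have := hanti (Set.left_mem_Icc.mpr ht.le) (Set.right_mem_Icc.mpr ht.le) ht.le
    simp only [hq, mul_zero, Real.exp_zero, mul_one, sub_zero] at this
    rw [abs_of_neg ht]
    calc f2 u * Real.exp (-(C * -t)) ≤ (f2 (u - t) * Real.exp (-C * t)) * Real.exp (-(C * -t)) := by
          apply mul_le_mul_of_nonneg_right this (Real.exp_nonneg _)
      _ = f2 (u - t) := by rw [mul_assoc, ← Real.exp_add]; norm_num
end

section
variable (C : ℝ) (f : ℝ → ℝ)

lemma core (hC : 0 < C) (hf : ContDiff ℝ 3 f)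
    (hqsc : ∀ t : ℝ, |iteratedDeriv 3 f t| ≤ C * iteratedDeriv 2 f t)
    (u s : ℝ) (hs : |s| ≤ 1 / C) :
    f u - f (u - s) ≤ deriv f u * s - (Real.exp 1)⁻¹ * (iteratedDeriv 2 f u * s ^ 2) := by
  obtain ⟨hd0, hd1, hd2, e2, e3⟩ := derivs f hf
  set f2 := iteratedDeriv 2 f with hf2
  set K := f2 u with hK
  have hKnn : 0 ≤ K := nonneg_of_mul_nonneg_right (le_trans (abs_nonneg _) (hqsc u)) hC
  have hder1 : ∀ y, HasDerivAt (deriv f) (f2 y) y := by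
    intro y; rw [← e2]; exact (hd1 y).hasDerivAt
  have hcomp0 : ∀ t : ℝ, HasDerivAt (fun t => f (u - t)) (-(deriv f (u - t))) t := by
    intro t
    simpa [Function.comp_def] using ((hd0 (u - t)).hasDerivAt).comp t ((hasDerivAt_const t u).sub (hasDerivAt_id t))
  have hcomp1 : ∀ t : ℝ, HasDerivAt (fun t => deriv f (u - t)) (-(f2 (u - t))) t := by
    intro t
    simpa [Function.comp_def] using (hder1 (u - t)).comp t ((hasDerivAt_const t u).sub (hasDerivAt_id t))
  have hexp : ∀ a t : ℝ, HasDerivAt (fun t : ℝ => Real.exp (a * t)) (a * Real.exp (a * t)) t := by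
    intro a t
    simpa [mul_comm, Function.comp_def] using (Real.hasDerivAt_exp (a * t)).comp t ((hasDerivAt_id t).const_mul a)
  have hCne : (C:ℝ) ≠ 0 := ne_of_gt hC
  rcases le_or_gt 0 s with hspos | hsneg
  · -- s ≥ 0
    have hs1 : s ≤ 1 / C := le_trans (le_abs_self _) hs
    set w1 : ℝ → ℝ := fun t => -(deriv f (u - t)) + deriv f u - K * ((1 - Real.exp (-C * t))/C)
      with hw1
    set w : ℝ → ℝ := fun t =>
      f (u - t) - f u + t * deriv f u - K * ((Real.exp (-C * t) + C * t - 1)/C^2) with hw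
    have hw1d : ∀ t, HasDerivAt w1 (f2 (u - t) - K * Real.exp (-C * t)) t := by
      intro t
      have h1 : HasDerivAt (fun t : ℝ => (1 - Real.exp (-C * t))/C)
          ((0 - -C * Real.exp (-C * t))/C) t :=
        (((hasDerivAt_const t (1:ℝ)).sub (hexp (-C) t))).div_const C
      have := ((hcomp1 t).neg.add (hasDerivAt_const t (deriv f u))).sub (h1.const_mul K)
      refine this.congr_deriv ?_
      field_simp
      try ring
    have hw1diff : Differentiable ℝ w1 := fun t => (hw1d t).differentiableAt
    have hwd : ∀ t, HasDerivAt w (w1 t) t := by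
      intro t
      have h1 : HasDerivAt (fun t : ℝ => (Real.exp (-C * t) + C * t - 1)/C^2)
          ((-C * Real.exp (-C * t) + C * 1)/C^2) t := by
        exact (((hexp (-C) t).add ((hasDerivAt_id' t).const_mul C)).sub_const 1).div_const (C^2)
      have := (((hcomp0 t).sub_const (f u)).add ((hasDerivAt_id' t).mul_const (deriv f u))).sub
        (h1.const_mul K)
      refine this.congr_deriv ?_
      rw [hw1]
      field_simp
      try ring
    have hwdiff : Differentiable ℝ w := fun t => (hwd t).differentiableAt
    have hw10 : w1 0 = 0 := by simp [hw1]
    have hmono1 : MonotoneOn w1 (Set.Icc 0 s) := by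
      apply monotoneOn_of_deriv_nonneg (convex_Icc _ _) hw1diff.continuous.continuousOn
        hw1diff.differentiableOn
      intro t ht
      rw [interior_Icc] at ht
      rw [(hw1d t).deriv]
      have := stab C f hC hf hqsc u t
      rw [abs_of_pos ht.1] at this
      rw [← hf2, ← hK] at this
      have : K * Real.exp (-C * t) ≤ f2 (u - t) := by rw [neg_mul]; exact this
      linarith
    have hmono : MonotoneOn w (Set.Icc 0 s) := by
      apply monotoneOn_of_deriv_nonneg (convex_Icc _ _) hwdiff.continuous.continuousOn
        hwdiff.differentiableOn
      intro t ht
      rw [interior_Icc] at ht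
      rw [(hwd t).deriv]
      have := hmono1 (Set.left_mem_Icc.mpr (by linarith [ht.1, ht.2] : (0:ℝ) ≤ s))
        ⟨le_of_lt ht.1, le_of_lt ht.2⟩ (le_of_lt ht.1)
      rwa [hw10] at this
    have hws : 0 ≤ w s := by
      have := hmono (Set.left_mem_Icc.mpr hspos) (Set.right_mem_Icc.mpr hspos) hspos
      have hw0 : w 0 = 0 := by simp [hw]
      rwa [hw0] at this
    -- scalar inequality with r = C * s
    have hr0 : 0 ≤ C * s := mul_nonneg hC.le hspos
    have hr1 : C * s ≤ 1 := by
      have := (le_div_iff₀ hC).mp hs1; nlinarith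
    have hscal := scalar_ineq hr0 hr1
    rw [show -(C*s) = -C*s by ring] at hscal
    have hmul : (Real.exp 1)⁻¹ * (K * s^2) ≤ K * ((Real.exp (-C * s) + C * s - 1)/C^2) := by
      have h := mul_le_mul_of_nonneg_left hscal hKnn
      have hC2 : (0:ℝ) < C^2 := by positivity
      rw [show K * ((Real.exp (-C * s) + C * s - 1)/C^2)
          = (K * (Real.exp (-C * s) + C * s - 1))/C^2 by ring, le_div_iff₀ hC2]
      nlinarith [h]
    simp only [hw] at hws
    linarith [hws, hmul]
  · -- s < 0
    have hs1 : -s ≤ 1 / C := le_trans (neg_le_abs _) hs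
    set w1 : ℝ → ℝ := fun t => -(deriv f (u - t)) + deriv f u - K * ((Real.exp (C * t) - 1)/C)
      with hw1
    set w : ℝ → ℝ := fun t =>
      f (u - t) - f u + t * deriv f u - K * ((Real.exp (C * t) - C * t - 1)/C^2) with hw
    have hw1d : ∀ t, HasDerivAt w1 (f2 (u - t) - K * Real.exp (C * t)) t := by
      intro t
      have h1 : HasDerivAt (fun t : ℝ => (Real.exp (C * t) - 1)/C)
          ((C * Real.exp (C * t))/C) t :=
        ((hexp C t).sub_const 1).div_const C
      have := ((hcomp1 t).neg.add (hasDerivAt_const t (deriv f u))).sub (h1.const_mul K)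
      refine this.congr_deriv ?_
      field_simp
      try ring
    have hw1diff : Differentiable ℝ w1 := fun t => (hw1d t).differentiableAt
    have hwd : ∀ t, HasDerivAt w (w1 t) t := by
      intro t
      have h1 : HasDerivAt (fun t : ℝ => (Real.exp (C * t) - C * t - 1)/C^2)
          ((C * Real.exp (C * t) - C * 1)/C^2) t := by
        exact (((hexp C t).sub ((hasDerivAt_id' t).const_mul C)).sub_const 1).div_const (C^2)
      have := (((hcomp0 t).sub_const (f u)).add ((hasDerivAt_id' t).mul_const (deriv f u))).sub
        (h1.const_mul K)
      refine this.congr_deriv ?_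
      rw [hw1]
      field_simp
      try ring
    have hwdiff : Differentiable ℝ w := fun t => (hwd t).differentiableAt
    have hw10 : w1 0 = 0 := by simp [hw1]
    have hmono1 : MonotoneOn w1 (Set.Icc s 0) := by
      apply monotoneOn_of_deriv_nonneg (convex_Icc _ _) hw1diff.continuous.continuousOn
        hw1diff.differentiableOn
      intro t ht
      rw [interior_Icc] at ht
      rw [(hw1d t).deriv]
      have := stab C f hC hf hqsc u t
      rw [abs_of_neg ht.2] at this
      rw [← hf2, ← hK] at this
      have : K * Real.exp (C * t) ≤ f2 (u - t) := by
        rw [show C * t = -(C * -t) by ring]; exact this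
      linarith
    have hanti : AntitoneOn w (Set.Icc s 0) := by
      apply antitoneOn_of_deriv_nonpos (convex_Icc _ _) hwdiff.continuous.continuousOn
        hwdiff.differentiableOn
      intro t ht
      rw [interior_Icc] at ht
      rw [(hwd t).deriv]
      have := hmono1 ⟨le_of_lt ht.1, le_of_lt ht.2⟩
        (Set.right_mem_Icc.mpr (by linarith [ht.1, ht.2] : s ≤ (0:ℝ))) (le_of_lt ht.2)
      rwa [hw10] at this
    have hws : 0 ≤ w s := by
      have := hanti (Set.left_mem_Icc.mpr hsneg.le) (Set.right_mem_Icc.mpr hsneg.le) hsneg.le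
      have hw0 : w 0 = 0 := by simp [hw]
      rwa [hw0] at this
    -- scalar inequality with r = -(C * s)
    have hr0 : 0 ≤ -(C * s) := by nlinarith
    have hr1 : -(C * s) ≤ 1 := by
      have := (le_div_iff₀ hC).mp hs1; nlinarith
    have hscal := scalar_ineq hr0 hr1
    rw [show -(-(C*s)) = C*s by ring] at hscal
    have hmul : (Real.exp 1)⁻¹ * (K * s^2) ≤ K * ((Real.exp (C * s) - C * s - 1)/C^2) := by
      have h := mul_le_mul_of_nonneg_left hscal hKnn
      have hC2 : (0:ℝ) < C^2 := by positivity
      rw [show K * ((Real.exp (C * s) - C * s - 1)/C^2)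
          = (K * (Real.exp (C * s) - C * s - 1))/C^2 by ring, le_div_iff₀ hC2]
      nlinarith [h]
    simp only [hw] at hws
    linarith [hws, hmul]
end


open Matrix

/-- Lower Taylor bound from Hessian stability: for `h x = ∑ i, f ((Ax - b)ᵢ)` with
`f` C-QSC and `‖AΔ‖_∞ ≤ 1/C`, we have `h (x - Δ) - h x ≥ -res_x(Δ)` where
`res_x(Δ) = ∇f(x)ᵀ(AΔ) - (1/e) (AΔ)ᵀ ∇²f(x) (AΔ)`. -/
theorem residual_lower_bound {n d : ℕ} (C : ℝ) (hC : 0 < C) (f : ℝ → ℝ)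
    (hf : ContDiff ℝ 3 f) (hconv : ConvexOn ℝ Set.univ f)
    (hqsc : ∀ t : ℝ, |iteratedDeriv 3 f t| ≤ C * iteratedDeriv 2 f t)
    (A : Matrix (Fin n) (Fin d) ℝ) (b : Fin n → ℝ)
    (h : (Fin d → ℝ) → ℝ)
    (hh : ∀ z, h z = ∑ i, f ((A.mulVec z - b) i))
    (x Δ : Fin d → ℝ) (hΔ : ‖A.mulVec Δ‖ ≤ 1 / C) :
    h (x - Δ) - h x ≥
      -((∑ i, deriv f ((A.mulVec x - b) i) * A.mulVec Δ i) -
        (Real.exp 1)⁻¹ * ∑ i, iteratedDeriv 2 f ((A.mulVec x - b) i) * (A.mulVec Δ i) ^ 2) := by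
  have key : ∀ i, f ((A.mulVec x - b) i) - f ((A.mulVec x - b) i - A.mulVec Δ i) ≤
      deriv f ((A.mulVec x - b) i) * A.mulVec Δ i -
        (Real.exp 1)⁻¹ * (iteratedDeriv 2 f ((A.mulVec x - b) i) * (A.mulVec Δ i) ^ 2) := by
    intro i
    apply core C f hC hf hqsc
    calc |A.mulVec Δ i| = ‖A.mulVec Δ i‖ := (Real.norm_eq_abs _).symm
      _ ≤ ‖A.mulVec Δ‖ := norm_le_pi_norm _ i
      _ ≤ 1 / C := hΔ
  have hsum := Finset.sum_le_sum (fun i (_ : i ∈ Finset.univ) => key i)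
  rw [hh, hh]
  have harg : ∀ i, (A.mulVec (x - Δ) - b) i = (A.mulVec x - b) i - A.mulVec Δ i := by
    intro i
    simp [Matrix.mulVec_sub]
    ring
  simp only [harg]
  rw [ge_iff_le, neg_sub]
  have e1 : ∑ i, (f ((A.mulVec x - b) i) - f ((A.mulVec x - b) i - A.mulVec Δ i))
      = ∑ i, f ((A.mulVec x - b) i) - ∑ i, f ((A.mulVec x - b) i - A.mulVec Δ i) :=
    Finset.sum_sub_distrib _ _
  have e2 : ∑ i, (deriv f ((A.mulVec x - b) i) * A.mulVec Δ i -
      (Real.exp 1)⁻¹ * (iteratedDeriv 2 f ((A.mulVec x - b) i) * (A.mulVec Δ i) ^ 2))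
      = (∑ i, deriv f ((A.mulVec x - b) i) * A.mulVec Δ i) -
        (Real.exp 1)⁻¹ * ∑ i, iteratedDeriv 2 f ((A.mulVec x - b) i) * (A.mulVec Δ i) ^ 2 := by
    rw [Finset.sum_sub_distrib, Finset.mul_sum]
  rw [e1, e2] at hsum
  linarith [hsum]
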